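/- Let G be a plane graph that contains neither K4 nor C6 as a subgraph. Then every triangular block B of G is one of the following five types: a single edge K2, a triangle K3, B4 (two triangles sharing an edge), B_{5,a} (three triangles on five vertices sharing a common apex vertex, consecutive triangles sharing an edge), or B_{5,b} (four triangles on five vertices all sharing a common central vertex, forming a wheel on 4 outer vertices, i.e., C4 plus a vertex joined to all four cycle vertices). -/

import Mathlib

open SimpleGraph

namespace PlanarTuran

/-- Reversal of darts, as a permutation of the darts of `G`. -/
def dartRev {V : Type*} (G : SimpleGraph V) : Equiv.Perm G.Dart where
  toFun := Dart.symm
  invFun := Dart.symm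
  left_inv d := Dart.symm_symm d
  right_inv d := Dart.symm_symm d

/-- A rotation system (combinatorial embedding) of a simple graph `G`: a permutation of the
darts which fixes the initial vertex of every dart and is a single cycle on the darts leaving
each given vertex. -/
structure RotationSystem {V : Type*} (G : SimpleGraph V) where
  rot : Equiv.Perm G.Dart
  rot_fst : ∀ d : G.Dart, (rot d).fst = d.fst
  rot_cycle : ∀ d d' : G.Dart, d.fst = d'.fst → rot.SameCycle d d'

namespace RotationSystem

variable {V : Type*} {G : SimpleGraph V}

/-- The face permutation of the embedding: its orbits are the faces of the plane graph. -/
def facePerm (R : RotationSystem G) : Equiv.Perm G.Dart :=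
  (dartRev G).trans R.rot

/-- The face containing (the side of) a dart, encoded as the set of darts on its boundary walk. -/
def faceOf (R : RotationSystem G) (d : G.Dart) : Set G.Dart :=
  {d' | R.facePerm.SameCycle d d'}

/-- The length of the face incident to the dart `d`: the number of edge-sides on its
boundary walk (a bridge is counted twice). -/
noncomputable def faceLen (R : RotationSystem G) (d : G.Dart) : ℕ :=
  (R.faceOf d).ncard

/-- Darts lying on the same face. -/
def faceSetoid (R : RotationSystem G) : Setoid G.Dart :=
  ⟨R.facePerm.SameCycle,
   ⟨fun d => Equiv.Perm.SameCycle.refl _ d, fun h => h.symm, fun h h' => h.trans h'⟩⟩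

/-- The number of faces of the embedded graph (only counting faces having at least one edge on
their boundary). -/
noncomputable def numFaces (R : RotationSystem G) : ℕ :=
  Nat.card (Quotient R.faceSetoid)

/-- Darts on the same face, within the connected component `C`. -/
def faceSetoidIn (R : RotationSystem G) (C : G.ConnectedComponent) :
    Setoid {d : G.Dart // G.connectedComponentMk d.fst = C} :=
  ⟨fun d d' => R.facePerm.SameCycle d.1 d'.1,
   ⟨fun d => Equiv.Perm.SameCycle.refl _ _, fun h => h.symm, fun h h' => h.trans h'⟩⟩

/-- The rotation system is a *plane* (genus zero) embedding: every connected component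
containing at least one edge satisfies Euler's formula `n - e + f = 2`
(written here as `2*n + 2*f = 2*e + 4`, where `2*e` is the number of darts). -/
def GenusZero (R : RotationSystem G) : Prop :=
  ∀ C : G.ConnectedComponent, (∃ d : G.Dart, G.connectedComponentMk d.fst = C) →
    2 * Nat.card {v : V // G.connectedComponentMk v = C}
      + 2 * Nat.card (Quotient (R.faceSetoidIn C))
      = Nat.card {d : G.Dart // G.connectedComponentMk d.fst = C} + 4

/-- The contribution `f(e) = 1/l₁ + 1/l₂` of an edge `e` to the face number, where `l₁, l₂`
are the lengths of the faces incident to the two darts of `e` (for a bridge both darts lie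
on the same face, giving `f(e) = 2/l`). -/
noncomputable def fEdge [Fintype V] [DecidableEq V] [DecidableRel G.Adj]
    (R : RotationSystem G) (e : Sym2 V) : ℚ :=
  ∑ d ∈ Finset.univ.filter (fun d : G.Dart => d.edge = e), (1 : ℚ) / (R.faceLen d)

/-- The edges `e₁` and `e₂` both lie on a common `3`-face. -/
def shares3Face (R : RotationSystem G) (e₁ e₂ : Sym2 V) : Prop :=
  ∃ d₁ d₂ : G.Dart, d₁.edge = e₁ ∧ d₂.edge = e₂ ∧ R.faceLen d₁ = 3 ∧
    R.facePerm.SameCycle d₁ d₂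

/-- The triangular block generated by an edge `e`: the closure of `{e}` under adding all
edges of any `3`-face containing an edge already present. -/
def triBlockOf (R : RotationSystem G) (e : Sym2 V) : Set (Sym2 V) :=
  {e' | Relation.ReflTransGen R.shares3Face e e'}

/-- `B` is a triangular block of the plane graph `G`. -/
def IsTriangularBlock (R : RotationSystem G) (B : Set (Sym2 V)) : Prop :=
  ∃ e ∈ G.edgeSet, B = R.triBlockOf e

variable (R : RotationSystem G)

lemma facePerm_fst (d : G.Dart) : (R.facePerm d).fst = d.snd := by
  show (R.rot (dartRev G d)).fst = d.snd
  rw [R.rot_fst]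
  rfl

private lemma orbit_sub {α : Type*} {F : Equiv.Perm α} {d : α} {S : Set α} (hd : d ∈ S)
    (h1 : ∀ x ∈ S, F x ∈ S) (h2 : ∀ x ∈ S, F⁻¹ x ∈ S) : ∀ n : ℤ, (F ^ n) d ∈ S := by
  intro n
  induction n using Int.induction_on with
  | zero => simpa
  | succ k ih =>
    have : F ^ ((k : ℤ) + 1) = F * F ^ (k : ℤ) := by
      rw [add_comm, zpow_add, zpow_one]
    rw [this, Equiv.Perm.mul_apply]
    exact h1 _ ih
  | pred k ih =>
    have : F ^ (-(k : ℤ) - 1) = F⁻¹ * F ^ (-(k : ℤ)) := by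
      rw [sub_eq_neg_add, zpow_add, zpow_neg_one]
    rw [this, Equiv.Perm.mul_apply]
    exact h2 _ ih

lemma mem_faceOf_self (d : G.Dart) : d ∈ R.faceOf d := Equiv.Perm.SameCycle.refl _ d

lemma faceOf_eq_of_mem {d d' : G.Dart} (h : d' ∈ R.faceOf d) : R.faceOf d' = R.faceOf d := by
  ext x
  exact ⟨fun hx => (Equiv.Perm.SameCycle.trans h hx : _), fun hx => (h.symm.trans hx : _)⟩

lemma facePerm_mem_faceOf {d d' : G.Dart} (h : d' ∈ R.faceOf d) :
    R.facePerm d' ∈ R.faceOf d :=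
  Equiv.Perm.SameCycle.trans h (Equiv.Perm.sameCycle_apply_right.mpr (Equiv.Perm.SameCycle.refl _ _))

lemma faceLen_congr {d d' : G.Dart} (h : d' ∈ R.faceOf d) : R.faceLen d' = R.faceLen d := by
  unfold faceLen
  rw [faceOf_eq_of_mem R h]

/-- Structure of a 3-face. -/
lemma face3 {d : G.Dart} (h : R.faceLen d = 3) :
    R.facePerm d ≠ d ∧ R.facePerm (R.facePerm d) ≠ d ∧
      R.facePerm (R.facePerm d) ≠ R.facePerm d ∧
      R.facePerm (R.facePerm (R.facePerm d)) = d ∧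
      R.faceOf d = {d, R.facePerm d, R.facePerm (R.facePerm d)} := by
  set F := R.facePerm with hF
  have h' : (R.faceOf d).ncard = 3 := h
  have hne1 : F d ≠ d := by
    intro hfix
    have hsub : R.faceOf d ⊆ ({d} : Set G.Dart) := by
      rintro e ⟨n, rfl⟩
      refine orbit_sub (S := ({d} : Set G.Dart)) rfl ?_ ?_ n
      · intro x hx
        simp only [Set.mem_singleton_iff] at hx ⊢
        rw [hx, hfix]
      · intro x hx
        simp only [Set.mem_singleton_iff] at hx ⊢
        rw [hx]
        apply F.injective
        exact (Equiv.apply_symm_apply F d).trans hfix.symm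
    have := Set.ncard_le_ncard hsub (Set.finite_singleton d)
    rw [h'] at this
    simp at this
  have hne2 : F (F d) ≠ d := by
    intro hfix
    have hsub : R.faceOf d ⊆ {d, F d} := by
      rintro e ⟨n, rfl⟩
      refine orbit_sub (S := ({d, F d} : Set G.Dart)) (by left; rfl) ?_ ?_ n
      · intro x hx
        simp only [Set.mem_insert_iff, Set.mem_singleton_iff] at hx ⊢
        rcases hx with hx | hx <;> rw [hx]
        · right; rfl
        · left; exact hfix
      · intro x hx
        simp only [Set.mem_insert_iff, Set.mem_singleton_iff] at hx ⊢
        rcases hx with hx | hx <;> rw [hx]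
        · right
          apply F.injective
          exact (Equiv.apply_symm_apply F d).trans hfix.symm
        · left
          exact Equiv.symm_apply_apply F d
    have := Set.ncard_le_ncard hsub ((Set.finite_singleton _).insert _)
    have h2 : ({d, F d} : Set G.Dart).ncard ≤ 2 := by
      apply le_trans (Set.ncard_insert_le _ _)
      simp
    omega
  have hne3 : F (F d) ≠ F d := fun hc => hne1 (F.injective hc)
  have hT : ({d, F d, F (F d)} : Set G.Dart).ncard = 3 :=
    Set.ncard_eq_three.mpr ⟨d, F d, F (F d), hne1.symm, hne2.symm, hne3.symm, rfl⟩
  have hsub : ({d, F d, F (F d)} : Set G.Dart) ⊆ R.faceOf d := by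
    intro x hx
    simp only [Set.mem_insert_iff, Set.mem_singleton_iff] at hx
    rcases hx with hx | hx | hx <;> rw [hx]
    · exact mem_faceOf_self R d
    · exact facePerm_mem_faceOf R (mem_faceOf_self R d)
    · exact facePerm_mem_faceOf R (facePerm_mem_faceOf R (mem_faceOf_self R d))
  have hfin : (R.faceOf d).Finite := by
    obtain ⟨x, y, z, _, _, _, hS⟩ := Set.ncard_eq_three.mp h'
    rw [hS]
    exact (Set.finite_singleton _).insert _ |>.insert _
  have heq : ({d, F d, F (F d)} : Set G.Dart) = R.faceOf d :=
    Set.eq_of_subset_of_ncard_le hsub (by rw [h', hT]) hfin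
  have h3 : F (F (F d)) = d := by
    have : F (F (F d)) ∈ R.faceOf d :=
      facePerm_mem_faceOf R (hsub (by right; right; rfl))
    rw [← heq] at this
    rcases this with h'' | h'' | h''
    · exact h''
    · exact (hne2 (F.injective h'')).elim
    · exact (hne1 (F.injective (F.injective h''))).elim
  exact ⟨hne1, hne2, hne3, h3, heq.symm⟩

/-- The face of dart `t` is a 3-face forming the oriented triangle `x → y → z → x`. -/
def FTri (t : G.Dart) (x y z : V) : Prop :=
  R.faceLen t = 3 ∧ t.fst = x ∧ t.snd = y ∧ (R.facePerm t).snd = z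

variable {R}

namespace FTri

variable {t : G.Dart} {x y z : V}

lemma len (h : R.FTri t x y z) : R.faceLen t = 3 := h.1
lemma fst1 (h : R.FTri t x y z) : t.fst = x := h.2.1
lemma snd1 (h : R.FTri t x y z) : t.snd = y := h.2.2.1
lemma fst2 (h : R.FTri t x y z) : (R.facePerm t).fst = y := by
  rw [R.facePerm_fst]; exact h.snd1
lemma snd2 (h : R.FTri t x y z) : (R.facePerm t).snd = z := h.2.2.2
lemma fst3 (h : R.FTri t x y z) : (R.facePerm (R.facePerm t)).fst = z := by
  rw [R.facePerm_fst]; exact h.snd2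
lemma cube (h : R.FTri t x y z) :
    R.facePerm (R.facePerm (R.facePerm t)) = t := (R.face3 h.len).2.2.2.1
lemma snd3 (h : R.FTri t x y z) : (R.facePerm (R.facePerm t)).snd = x := by
  have := R.facePerm_fst (R.facePerm (R.facePerm t))
  rw [h.cube] at this
  rw [← this, h.fst1]

lemma mk' {q : G.Dart} (h : R.faceLen q = 3) :
    R.FTri q q.fst q.snd ((R.facePerm q).snd) := ⟨h, rfl, rfl, rfl⟩

lemma adj1 (h : R.FTri t x y z) : G.Adj x y := by rw [← h.fst1, ← h.snd1]; exact t.adj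
lemma adj2 (h : R.FTri t x y z) : G.Adj y z := by
  rw [← h.fst2, ← h.snd2]; exact (R.facePerm t).adj
lemma adj3 (h : R.FTri t x y z) : G.Adj z x := by
  rw [← h.fst3, ← h.snd3]; exact (R.facePerm (R.facePerm t)).adj

lemma ne1 (h : R.FTri t x y z) : x ≠ y := h.adj1.ne
lemma ne2 (h : R.FTri t x y z) : y ≠ z := h.adj2.ne
lemma ne3 (h : R.FTri t x y z) : z ≠ x := h.adj3.ne

lemma len2 (h : R.FTri t x y z) : R.faceLen (R.facePerm t) = 3 := by
  rw [R.faceLen_congr (R.facePerm_mem_faceOf (R.mem_faceOf_self t))]; exact h.len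

lemma rotate (h : R.FTri t x y z) : R.FTri (R.facePerm t) y z x :=
  ⟨h.len2, h.fst2, h.snd2, h.snd3⟩

lemma faceOf_eq (h : R.FTri t x y z) :
    R.faceOf t = {t, R.facePerm t, R.facePerm (R.facePerm t)} := (R.face3 h.len).2.2.2.2

/-- every dart on the face of `t` matches one of the three oriented sides -/
lemma dart_cases (h : R.FTri t x y z) {q : G.Dart} (hq : q ∈ R.faceOf t) :
    (q.fst = x ∧ q.snd = y) ∨ (q.fst = y ∧ q.snd = z) ∨ (q.fst = z ∧ q.snd = x) := by
  rw [h.faceOf_eq] at hq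
  rcases hq with hq | hq | hq <;> rw [hq]
  · exact Or.inl ⟨h.fst1, h.snd1⟩
  · exact Or.inr (Or.inl ⟨h.fst2, h.snd2⟩)
  · exact Or.inr (Or.inr ⟨h.fst3, h.snd3⟩)

lemma edge_cases (h : R.FTri t x y z) {q : G.Dart} (hq : q ∈ R.faceOf t) :
    q.edge = s(x, y) ∨ q.edge = s(y, z) ∨ q.edge = s(z, x) := by
  have he : ∀ d : G.Dart, d.edge = s(d.fst, d.snd) := fun d => rfl
  rcases h.dart_cases hq with ⟨h1, h2⟩ | ⟨h1, h2⟩ | ⟨h1, h2⟩ <;>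
    rw [he q, h1, h2] <;> tauto

/-- the three darts of the face -/
lemma dart1_mem (h : R.FTri t x y z) : t ∈ R.faceOf t := R.mem_faceOf_self t
lemma dart2_mem (h : R.FTri t x y z) : R.facePerm t ∈ R.faceOf t :=
  R.facePerm_mem_faceOf (R.mem_faceOf_self t)
lemma dart3_mem (h : R.FTri t x y z) : R.facePerm (R.facePerm t) ∈ R.faceOf t :=
  R.facePerm_mem_faceOf h.dart2_mem

end FTri

lemma dart_eq_of {q t : G.Dart} (h1 : q.fst = t.fst) (h2 : q.snd = t.snd) : q = t :=
  Dart.ext _ _ (Prod.ext h1 h2)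

/-- if a dart of the face of `t` coincides with a dart of the face of `t'`, the faces agree -/
lemma faceOf_eq_faceOf {t t' : G.Dart} {q : G.Dart} (hq : q ∈ R.faceOf t)
    (hq' : q ∈ R.faceOf t') : R.faceOf t = R.faceOf t' := by
  rw [← R.faceOf_eq_of_mem hq, ← R.faceOf_eq_of_mem hq']

lemma shares3Face_symm : Symmetric R.shares3Face := by
  rintro e₁ e₂ ⟨d₁, d₂, h1, h2, h3, hsc⟩
  refine ⟨d₂, d₁, h2, h1, ?_, hsc.symm⟩
  rw [R.faceLen_congr (hsc : d₂ ∈ R.faceOf d₁)]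
  exact h3

lemma shares3Face_of_mem {t : G.Dart} (h3 : R.faceLen t = 3) {d₁ d₂ : G.Dart}
    (h1 : d₁ ∈ R.faceOf t) (h2 : d₂ ∈ R.faceOf t) : R.shares3Face d₁.edge d₂.edge := by
  refine ⟨d₁, d₂, rfl, rfl, ?_, (h1.symm.trans h2 : _)⟩
  rw [R.faceLen_congr h1]; exact h3

lemma triBlockOf_congr {e₁ e₂ : Sym2 V} (h : R.shares3Face e₁ e₂) :
    R.triBlockOf e₁ = R.triBlockOf e₂ := by
  ext e'
  constructor
  · intro he
    exact Relation.ReflTransGen.trans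
      (Relation.ReflTransGen.single (R.shares3Face_symm h)) he
  · intro he
    exact Relation.ReflTransGen.trans (Relation.ReflTransGen.single h) he

/-- generic closure computation for triangular blocks -/
lemma triBlock_eq_of {e : Sym2 V} {S : Set (Sym2 V)} (heS : e ∈ S)
    (hreach : ∀ e' ∈ S, Relation.ReflTransGen R.shares3Face e e')
    (hclosed : ∀ e₁ ∈ S, ∀ e₂, R.shares3Face e₁ e₂ → e₂ ∈ S) :
    R.triBlockOf e = S := by
  ext e'
  constructor
  · intro he'
    induction he' with
    | refl => exact heS
    | tail _ hstep ih => exact hclosed _ ih _ hstep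
  · exact fun h => hreach e' h

namespace FTri

variable {t : G.Dart} {x y z : V}

lemma edge1 (h : R.FTri t x y z) : t.edge = s(x, y) := by
  have : t.edge = s(t.fst, t.snd) := rfl
  rw [this, h.fst1, h.snd1]

lemma edge2 (h : R.FTri t x y z) : (R.facePerm t).edge = s(y, z) := h.rotate.edge1

lemma edge3 (h : R.FTri t x y z) : (R.facePerm (R.facePerm t)).edge = s(z, x) :=
  h.rotate.rotate.edge1

lemma sh12 (h : R.FTri t x y z) : R.shares3Face s(x, y) s(y, z) := by
  have := R.shares3Face_of_mem h.len h.dart1_mem h.dart2_mem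
  rwa [h.edge1, h.edge2] at this

lemma sh23 (h : R.FTri t x y z) : R.shares3Face s(y, z) s(z, x) := by
  have := R.shares3Face_of_mem h.len h.dart2_mem h.dart3_mem
  rwa [h.edge2, h.edge3] at this

lemma sh31 (h : R.FTri t x y z) : R.shares3Face s(z, x) s(x, y) := by
  have := R.shares3Face_of_mem h.len h.dart3_mem h.dart1_mem
  rwa [h.edge3, h.edge1] at this

lemma sh13 (h : R.FTri t x y z) : R.shares3Face s(x, y) s(z, x) := by
  have := R.shares3Face_of_mem h.len h.dart1_mem h.dart3_mem
  rwa [h.edge1, h.edge3] at this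

end FTri

lemma mem_of_facePerm_mem {q T : G.Dart} (h : R.facePerm q ∈ R.faceOf T) :
    q ∈ R.faceOf T :=
  (h.trans ((R.facePerm_mem_faceOf (R.mem_faceOf_self q) : _)).symm : _)

lemma mem_of_facePerm2_mem {q T : G.Dart}
    (h : R.facePerm (R.facePerm q) ∈ R.faceOf T) : q ∈ R.faceOf T :=
  mem_of_facePerm_mem (mem_of_facePerm_mem h)

lemma sat_contra {T q : G.Dart} {x y z : V} (hT : R.FTri T x y z) (hq : q ∈ R.faceOf T)
    (h1 : ¬(q.fst = x ∧ q.snd = y)) (h2 : ¬(q.fst = y ∧ q.snd = z))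
    (h3 : ¬(q.fst = z ∧ q.snd = x)) : False := by
  rcases hT.dart_cases hq with h | h | h <;> tauto

lemma dart_of_edge {q : G.Dart} {α β : V} (h : q.edge = s(α, β)) :
    (q.fst = α ∧ q.snd = β) ∨ (q.fst = β ∧ q.snd = α) := by
  have : q.edge = s(q.fst, q.snd) := rfl
  rw [this] at h
  rcases Sym2.eq_iff.mp h with ⟨h1, h2⟩ | ⟨h1, h2⟩ <;> tauto
end RotationSystem

/-- A graph is planar iff it admits a genus-zero rotation system. -/
def _root_.SimpleGraph.IsPlanar {V : Type*} (G : SimpleGraph V) : Prop :=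
  ∃ R : RotationSystem G, R.GenusZero

/-- `G` contains no cycle of length `k`; equivalently, no subgraph isomorphic to `C_k`. -/
def _root_.SimpleGraph.CycleFree {V : Type*} (G : SimpleGraph V) (k : ℕ) : Prop :=
  ∀ ⦃v : V⦄ (w : G.Walk v v), w.IsCycle → w.length ≠ k

/-- A graph is 2-connected if it has at least 3 vertices and deleting any single vertex
leaves it connected. -/
def _root_.SimpleGraph.IsTwoConnected {V : Type*} (G : SimpleGraph V) : Prop :=
  3 ≤ Nat.card V ∧ ∀ v : V, (G.induce {u | u ≠ v}).Connected

/-- The set of vertices covered by a set `B` of edges. -/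
def blockVerts {V : Type*} (B : Set (Sym2 V)) : Set V :=
  {v | ∃ e ∈ B, v ∈ e}

/-- An edge set forming a single edge `K₂`. -/
def IsK2Block {V : Type*} (B : Set (Sym2 V)) : Prop :=
  ∃ u v : V, u ≠ v ∧ B = {s(u, v)}

/-- An edge set forming a triangle `K₃`. -/
def IsK3Block {V : Type*} (B : Set (Sym2 V)) : Prop :=
  ∃ u v w : V, u ≠ v ∧ u ≠ w ∧ v ≠ w ∧ B = {s(u, v), s(v, w), s(u, w)}

/-- An edge set forming `B₄`, two triangles `u v w` and `v w x` sharing the edge `v w`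
(`K₄` minus an edge). -/
def IsB4Block {V : Type*} (B : Set (Sym2 V)) : Prop :=
  ∃ u v w x : V, u ≠ v ∧ u ≠ w ∧ u ≠ x ∧ v ≠ w ∧ v ≠ x ∧ w ≠ x ∧
    B = {s(u, v), s(u, w), s(v, w), s(v, x), s(w, x)}

/-- An edge set forming `B₅ₐ`: a path `x₁x₂x₃x₄` plus an apex `y` joined to all of
`x₁, x₂, x₃, x₄`. -/
def IsB5aBlock {V : Type*} (B : Set (Sym2 V)) : Prop :=
  ∃ y x₁ x₂ x₃ x₄ : V, y ≠ x₁ ∧ y ≠ x₂ ∧ y ≠ x₃ ∧ y ≠ x₄ ∧ x₁ ≠ x₂ ∧ x₁ ≠ x₃ ∧ x₁ ≠ x₄ ∧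
    x₂ ≠ x₃ ∧ x₂ ≠ x₄ ∧ x₃ ≠ x₄ ∧
    B = {s(y, x₁), s(y, x₂), s(y, x₃), s(y, x₄), s(x₁, x₂), s(x₂, x₃), s(x₃, x₄)}

/-- An edge set forming `B₅ᵦ`, the wheel `W₄`: a `4`-cycle `x₁x₂x₃x₄` plus a center `c`
joined to all four cycle vertices. -/
def IsB5bBlock {V : Type*} (B : Set (Sym2 V)) : Prop :=
  ∃ c x₁ x₂ x₃ x₄ : V, c ≠ x₁ ∧ c ≠ x₂ ∧ c ≠ x₃ ∧ c ≠ x₄ ∧ x₁ ≠ x₂ ∧ x₁ ≠ x₃ ∧ x₁ ≠ x₄ ∧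
    x₂ ≠ x₃ ∧ x₂ ≠ x₄ ∧ x₃ ≠ x₄ ∧
    B = {s(c, x₁), s(c, x₂), s(c, x₃), s(c, x₄), s(x₁, x₂), s(x₂, x₃), s(x₃, x₄), s(x₄, x₁)}


section Lemmas
variable {V : Type*} {G : SimpleGraph V}

lemma k4_false (hK4 : G.CliqueFree 4) {a b c d : V}
    (hab : G.Adj a b) (hac : G.Adj a c) (had : G.Adj a d)
    (hbc : G.Adj b c) (hbd : G.Adj b d) (hcd : G.Adj c d) : False := by
  classical
  refine hK4 {a, b, c, d} ⟨?_, ?_⟩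
  · intro u hu v hv huv
    simp only [Finset.coe_insert, Set.mem_insert_iff, Finset.coe_singleton,
      Set.mem_singleton_iff] at hu hv
    rcases hu with rfl | rfl | rfl | rfl <;> rcases hv with rfl | rfl | rfl | rfl <;>
      first
        | exact absurd rfl huv
        | assumption
        | exact hab.symm | exact hac.symm | exact had.symm
        | exact hbc.symm | exact hbd.symm | exact hcd.symm
  · rw [Finset.card_insert_of_notMem, Finset.card_insert_of_notMem,
      Finset.card_insert_of_notMem, Finset.card_singleton] <;>
      simp [hab.ne, hac.ne, had.ne, hbc.ne, hbd.ne, hcd.ne]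

lemma c6_false (hC6 : G.CycleFree 6) {a b c d e f : V}
    (hab : G.Adj a b) (hbc : G.Adj b c) (hcd : G.Adj c d)
    (hde : G.Adj d e) (hef : G.Adj e f) (hfa : G.Adj f a)
    (hac : a ≠ c) (had : a ≠ d) (hae : a ≠ e)
    (hbd : b ≠ d) (hbe : b ≠ e) (hbf : b ≠ f)
    (hce : c ≠ e) (hcf : c ≠ f) (hdf : d ≠ f) : False := by
  classical
  have hw : (SimpleGraph.Walk.cons hab (SimpleGraph.Walk.cons hbc
      (SimpleGraph.Walk.cons hcd (SimpleGraph.Walk.cons hde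
      (SimpleGraph.Walk.cons hef (SimpleGraph.Walk.cons hfa
      SimpleGraph.Walk.nil)))))).IsCycle := by
    rw [SimpleGraph.Walk.isCycle_def]
    refine ⟨?_, by simp, ?_⟩
    · rw [SimpleGraph.Walk.isTrail_def]
      simp only [SimpleGraph.Walk.edges_cons, SimpleGraph.Walk.edges_nil]
      simp [Sym2.eq, Sym2.rel_iff', hab.ne, hbc.ne, hcd.ne, hde.ne, hef.ne, hfa.ne,
        hac, had, hae, hbd, hbe, hbf, hce, hcf, hdf,
        hac.symm, had.symm, hae.symm, hbd.symm, hbe.symm, hbf.symm, hce.symm, hcf.symm,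
        hdf.symm, hab.ne', hbc.ne', hcd.ne', hde.ne', hef.ne', hfa.ne', Ne.symm]
    · simp [hab.ne, hbc.ne, hcd.ne, hde.ne, hef.ne, hfa.ne',
        hac, had, hae, hbd, hbe, hbf, hce, hcf, hdf, Ne.symm,
        hac.symm, had.symm, hae.symm, hbd.symm, hbe.symm, hbf.symm, hce.symm, hcf.symm,
        hdf.symm]
  exact hC6 _ hw (by simp)

open RotationSystem RotationSystem.FTri

variable {R : RotationSystem G}

/-- In a wheel `W₄` configuration, the outer dart of a rim edge lies on no 3-face. -/
lemma B5b_rim (hK4 : G.CliqueFree 4) (hC6 : G.CycleFree 6)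
    {t1 t2 t3 t4 : G.Dart} {y x1 x2 x3 x4 : V}
    (h1 : R.FTri t1 y x2 x1) (h2 : R.FTri t2 y x3 x2) (h3 : R.FTri t3 y x4 x3)
    (h4 : R.FTri t4 y x1 x4) (n13 : x1 ≠ x3) (n24 : x2 ≠ x4)
    {q : G.Dart} (hqf : q.fst = x1) (hqs : q.snd = x2) (hq3 : R.faceLen q = 3) : False := by
  set z := (R.facePerm q).snd with hz
  have hqT : R.FTri q x1 x2 z := ⟨hq3, hqf, hqs, rfl⟩
  have hy1 : y ≠ x1 := h4.ne1
  have hy2 : y ≠ x2 := h1.ne1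
  have hy3 : y ≠ x3 := h2.ne1
  have hy4 : y ≠ x4 := h3.ne1
  have n12 : x1 ≠ x2 := hqT.ne1
  have n23 : x2 ≠ x3 := h2.ne2.symm
  have n34 : x3 ≠ x4 := h3.ne2.symm
  have n41 : x4 ≠ x1 := h4.ne2.symm
  by_cases hzy : z = y
  · -- the face of q would contain the dart x2 → y, which lies on the face of t2
    have he : R.facePerm q = R.facePerm (R.facePerm t2) := by
      apply dart_eq_of
      · rw [R.facePerm_fst, hqs, h2.rotate.rotate.fst1]
      · rw [← hz, hzy, h2.rotate.rotate.snd1]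
    have hmem : q ∈ R.faceOf t2 := by
      apply mem_of_facePerm_mem
      rw [he]
      exact h2.dart3_mem
    exact sat_contra h2 hmem (by rw [hqf]; tauto) (by rw [hqf]; tauto)
      (by rw [hqf]; tauto)
  · by_cases hz3 : z = x3
    · subst hz3
      exact k4_false hK4 (h1.adj3.symm) (h1.adj1) (h2.adj1) (hqT.adj1)
        (hqT.adj3.symm) (hqT.adj2)
    · by_cases hz4 : z = x4
      · subst hz4
        exact k4_false hK4 (h1.adj3.symm) (h1.adj1) (h3.adj1) (hqT.adj1)
          (h4.adj2) (hqT.adj2)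
      · -- new apex: a 6-cycle z x1 x4 x3 y x2
        exact c6_false hC6 hqT.adj3 h4.adj2 h3.adj2 h2.adj1.symm h1.adj1 hqT.adj2
          hz4 hz3 hzy n13 (hy1.symm) n12 (hy4.symm) n24.symm (n23.symm)

lemma closed_internal {T : G.Dart} {x y z : V} (hT : R.FTri T x y z) {q d₂ : G.Dart}
    (hq : q = T) (hsc : R.facePerm.SameCycle q d₂) :
    d₂.edge = s(x, y) ∨ d₂.edge = s(y, z) ∨ d₂.edge = s(z, x) :=
  hT.edge_cases (hq ▸ hsc : _)

lemma stageB5b (hK4 : G.CliqueFree 4) (hC6 : G.CycleFree 6)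
    {t1 t2 t3 t4 : G.Dart} {y x1 x2 x3 x4 : V}
    (h1 : R.FTri t1 y x2 x1) (h2 : R.FTri t2 y x3 x2) (h3 : R.FTri t3 y x4 x3)
    (h4 : R.FTri t4 y x1 x4) (n13 : x1 ≠ x3) (n24 : x2 ≠ x4) :
    R.triBlockOf (s(y, x2)) =
      {s(y,x1), s(y,x2), s(y,x3), s(y,x4), s(x1,x2), s(x2,x3), s(x3,x4), s(x4,x1)} := by
  have h1a := h1.rotate; have h1b := h1.rotate.rotate
  have h2a := h2.rotate; have h2b := h2.rotate.rotate
  have h3a := h3.rotate; have h3b := h3.rotate.rotate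
  have h4a := h4.rotate; have h4b := h4.rotate.rotate
  refine R.triBlock_eq_of (by simp) ?_ ?_
  · -- reachability
    have ryx3 : Relation.ReflTransGen R.shares3Face s(y,x2) s(y,x3) := by
      rw [show s(y,x2) = s(x2,y) from Sym2.eq_swap]
      exact Relation.ReflTransGen.single h2.sh31
    have ryx1 : Relation.ReflTransGen R.shares3Face s(y,x2) s(y,x1) := by
      rw [show s(y,x1) = s(x1,y) from Sym2.eq_swap]
      exact Relation.ReflTransGen.single h1.sh13
    have ryx4 : Relation.ReflTransGen R.shares3Face s(y,x2) s(y,x4) :=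
      ryx3.trans (by
        rw [show s(y,x3) = s(x3,y) from Sym2.eq_swap]
        exact Relation.ReflTransGen.single h3.sh31)
    intro e' he'
    simp only [Set.mem_insert_iff, Set.mem_singleton_iff] at he'
    rcases he' with rfl | rfl | rfl | rfl | rfl | rfl | rfl | rfl
    · exact ryx1
    · exact Relation.ReflTransGen.refl
    · exact ryx3
    · exact ryx4
    · rw [show s(x1,x2) = s(x2,x1) from Sym2.eq_swap]
      exact Relation.ReflTransGen.single h1.sh12
    · refine ryx3.trans ?_
      rw [show s(x2,x3) = s(x3,x2) from Sym2.eq_swap]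
      exact Relation.ReflTransGen.single h2.sh12
    · refine ryx4.trans ?_
      rw [show s(x3,x4) = s(x4,x3) from Sym2.eq_swap]
      exact Relation.ReflTransGen.single h3.sh12
    · refine ryx1.trans ?_
      rw [show s(x4,x1) = s(x1,x4) from Sym2.eq_swap]
      exact Relation.ReflTransGen.single h4.sh12
  · -- closedness
    rintro e₁ he₁ e₂ ⟨q, d₂, hqe, hd₂e, hq3, hsc⟩
    simp only [Set.mem_insert_iff, Set.mem_singleton_iff] at he₁
    rcases he₁ with rfl | rfl | rfl | rfl | rfl | rfl | rfl | rfl <;>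
        rcases dart_of_edge hqe with ⟨hf, hs⟩ | ⟨hf, hs⟩
    · rcases closed_internal h4 (dart_eq_of (hf.trans h4.fst1.symm) (hs.trans h4.snd1.symm))
        hsc with h | h | h <;> rw [← hd₂e, h] <;> simp [Sym2.eq_iff]
    · rcases closed_internal h1b (dart_eq_of (hf.trans h1b.fst1.symm) (hs.trans h1b.snd1.symm))
        hsc with h | h | h <;> rw [← hd₂e, h] <;> simp [Sym2.eq_iff]
    · rcases closed_internal h1 (dart_eq_of (hf.trans h1.fst1.symm) (hs.trans h1.snd1.symm))
        hsc with h | h | h <;> rw [← hd₂e, h] <;> simp [Sym2.eq_iff]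
    · rcases closed_internal h2b (dart_eq_of (hf.trans h2b.fst1.symm) (hs.trans h2b.snd1.symm))
        hsc with h | h | h <;> rw [← hd₂e, h] <;> simp [Sym2.eq_iff]
    · rcases closed_internal h2 (dart_eq_of (hf.trans h2.fst1.symm) (hs.trans h2.snd1.symm))
        hsc with h | h | h <;> rw [← hd₂e, h] <;> simp [Sym2.eq_iff]
    · rcases closed_internal h3b (dart_eq_of (hf.trans h3b.fst1.symm) (hs.trans h3b.snd1.symm))
        hsc with h | h | h <;> rw [← hd₂e, h] <;> simp [Sym2.eq_iff]
    · rcases closed_internal h3 (dart_eq_of (hf.trans h3.fst1.symm) (hs.trans h3.snd1.symm))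
        hsc with h | h | h <;> rw [← hd₂e, h] <;> simp [Sym2.eq_iff]
    · rcases closed_internal h4b (dart_eq_of (hf.trans h4b.fst1.symm) (hs.trans h4b.snd1.symm))
        hsc with h | h | h <;> rw [← hd₂e, h] <;> simp [Sym2.eq_iff]
    · exact absurd (B5b_rim hK4 hC6 h1 h2 h3 h4 n13 n24 hf hs hq3) not_false
    · rcases closed_internal h1a (dart_eq_of (hf.trans h1a.fst1.symm) (hs.trans h1a.snd1.symm))
        hsc with h | h | h <;> rw [← hd₂e, h] <;> simp [Sym2.eq_iff]
    · exact absurd (B5b_rim hK4 hC6 h2 h3 h4 h1 n24 n13.symm hf hs hq3) not_false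
    · rcases closed_internal h2a (dart_eq_of (hf.trans h2a.fst1.symm) (hs.trans h2a.snd1.symm))
        hsc with h | h | h <;> rw [← hd₂e, h] <;> simp [Sym2.eq_iff]
    · exact absurd (B5b_rim hK4 hC6 h3 h4 h1 h2 n13.symm n24.symm hf hs hq3) not_false
    · rcases closed_internal h3a (dart_eq_of (hf.trans h3a.fst1.symm) (hs.trans h3a.snd1.symm))
        hsc with h | h | h <;> rw [← hd₂e, h] <;> simp [Sym2.eq_iff]
    · exact absurd (B5b_rim hK4 hC6 h4 h1 h2 h3 n24.symm n13 hf hs hq3) not_false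
    · rcases closed_internal h4a (dart_eq_of (hf.trans h4a.fst1.symm) (hs.trans h4a.snd1.symm))
        hsc with h | h | h <;> rw [← hd₂e, h] <;> simp [Sym2.eq_iff]

section B5a
variable {tL tM tR : G.Dart} {y x1 x2 x3 x4 : V}

/-- frontier dart `y → x1` of a B5a configuration, given no B5b-completion -/
lemma B5a_q1 (hK4 : G.CliqueFree 4) (hC6 : G.CycleFree 6)
    (hL : R.FTri tL y x2 x1) (hM : R.FTri tM x2 y x3) (hR : R.FTri tR x3 y x4)
    (n13 : x1 ≠ x3) (n14 : x1 ≠ x4) (n24 : x2 ≠ x4)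
    (hnc : ∀ q : G.Dart, q.fst = y → q.snd = x1 → R.faceLen q = 3 →
      (R.facePerm q).snd ≠ x4)
    {q : G.Dart} (hqf : q.fst = y) (hqs : q.snd = x1) (hq3 : R.faceLen q = 3) : False := by
  set z := (R.facePerm q).snd with hz
  have hqT : R.FTri q y x1 z := ⟨hq3, hqf, hqs, rfl⟩
  have hy1 : y ≠ x1 := hqT.ne1
  have hy2 : y ≠ x2 := hL.ne1
  have hy3 : y ≠ x3 := hM.ne2
  have hy4 : y ≠ x4 := hR.ne2
  have n12 : x1 ≠ x2 := hL.ne2.symm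
  have n23 : x2 ≠ x3 := hM.ne3.symm
  have n34 : x3 ≠ x4 := hR.ne3.symm
  by_cases hz2 : z = x2
  · -- F² q  = x2 → y = tM
    have he : R.facePerm (R.facePerm q) = tM :=
      dart_eq_of (by rw [hqT.fst3, hz2, hM.fst1]) (by rw [hqT.snd3, hM.snd1])
    have hmem : q ∈ R.faceOf tM := mem_of_facePerm2_mem (he ▸ hM.dart1_mem)
    exact sat_contra hM hmem (by rw [hqf]; tauto) (by rw [hqs]; tauto) (by rw [hqf]; tauto)
  · by_cases hz3 : z = x3
    · subst hz3
      exact k4_false hK4 hqT.adj1 hL.adj1 hM.adj2 hL.adj2.symm hqT.adj2 hM.adj3.symm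
    · by_cases hz4 : z = x4
      · exact hnc q hqf hqs hq3 hz4
      · exact c6_false hC6 hqT.adj2.symm hL.adj2.symm hM.adj3.symm hR.adj3.symm
          hR.adj2.symm hqT.adj3.symm hz2 hz3 hz4 n13 n14 hy1.symm n24 hy2.symm hy3.symm

/-- frontier dart `x4 → y` of a B5a configuration, given no B5b-completion -/
lemma B5a_q2 (hK4 : G.CliqueFree 4) (hC6 : G.CycleFree 6)
    (hL : R.FTri tL y x2 x1) (hM : R.FTri tM x2 y x3) (hR : R.FTri tR x3 y x4)
    (n13 : x1 ≠ x3) (n14 : x1 ≠ x4) (n24 : x2 ≠ x4)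
    (hnc : ∀ q : G.Dart, q.fst = y → q.snd = x1 → R.faceLen q = 3 →
      (R.facePerm q).snd ≠ x4)
    {q : G.Dart} (hqf : q.fst = x4) (hqs : q.snd = y) (hq3 : R.faceLen q = 3) : False := by
  set z := (R.facePerm q).snd with hz
  have hqT : R.FTri q x4 y z := ⟨hq3, hqf, hqs, rfl⟩
  have hy1 : y ≠ x1 := hL.ne3.symm
  have hy2 : y ≠ x2 := hL.ne1
  have hy3 : y ≠ x3 := hM.ne2
  have hy4 : y ≠ x4 := hR.ne2
  have n12 : x1 ≠ x2 := hL.ne2.symm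
  have n23 : x2 ≠ x3 := hM.ne3.symm
  have n34 : x3 ≠ x4 := hR.ne3.symm
  by_cases hz3 : z = x3
  · -- F q = y → x3 = F tM
    have he : R.facePerm q = R.facePerm tM :=
      dart_eq_of (by rw [hqT.fst2, hM.rotate.fst1]) (by rw [hM.rotate.snd1]; exact hz3)
    have hmem : q ∈ R.faceOf tM := mem_of_facePerm_mem (he ▸ hM.dart2_mem)
    exact sat_contra hM hmem (by rw [hqf]; tauto) (by rw [hqf]; tauto) (by rw [hqf]; tauto)
  · by_cases hz2 : z = x2
    · subst hz2
      exact k4_false hK4 hL.adj1 hM.adj2 hR.adj2 hM.adj3.symm hqT.adj3 hR.adj3.symm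
    · by_cases hz1 : z = x1
      · -- F q = y → x1; its face is a completion face
        have hf1 : (R.facePerm q).fst = y := hqT.fst2
        have hs1 : (R.facePerm q).snd = x1 := by rw [← hz, hz1]
        have hl1 : R.faceLen (R.facePerm q) = 3 := by
          rw [R.faceLen_congr (R.facePerm_mem_faceOf (R.mem_faceOf_self q))]
          exact hq3
        exact hnc (R.facePerm q) hf1 hs1 hl1 hqT.snd3
      · exact c6_false hC6 hqT.adj3 hR.adj3 hM.adj3 hL.adj2 hL.adj3 hqT.adj2
          hz3 hz2 hz1 n24.symm n14.symm hy4.symm n13.symm hy3.symm hy2.symm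
end B5a
section B5aR
variable {tL tM tR : G.Dart} {y x1 x2 x3 x4 : V}

/-- frontier dart `x1 → x2` of a B5a configuration -/
lemma B5a_r1 (hK4 : G.CliqueFree 4) (hC6 : G.CycleFree 6)
    (hL : R.FTri tL y x2 x1) (hM : R.FTri tM x2 y x3) (hR : R.FTri tR x3 y x4)
    (n13 : x1 ≠ x3) (n14 : x1 ≠ x4) (n24 : x2 ≠ x4)
    {q : G.Dart} (hqf : q.fst = x1) (hqs : q.snd = x2) (hq3 : R.faceLen q = 3) : False := by
  have hqT : R.FTri q x1 x2 (R.facePerm q).snd := ⟨hq3, hqf, hqs, rfl⟩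
  have hy1 : y ≠ x1 := hL.ne3.symm
  have hy2 : y ≠ x2 := hL.ne1
  have hy3 : y ≠ x3 := hM.ne2
  have hy4 : y ≠ x4 := hR.ne2
  have n12 : x1 ≠ x2 := hL.ne2.symm
  have n23 : x2 ≠ x3 := hM.ne3.symm
  have n34 : x3 ≠ x4 := hR.ne3.symm
  by_cases hzy : (R.facePerm q).snd = y
  · have he : R.facePerm q = tM :=
      dart_eq_of (by rw [hqT.fst2, hM.fst1]) (by rw [hzy, hM.snd1])
    have hmem : q ∈ R.faceOf tM := mem_of_facePerm_mem (he ▸ hM.dart1_mem)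
    exact sat_contra hM hmem (by rw [hqf]; tauto) (by rw [hqf]; tauto) (by rw [hqf]; tauto)
  · by_cases hz3 : (R.facePerm q).snd = x3
    · rw [hz3] at hqT
      exact k4_false hK4 hL.adj3.symm hL.adj1 hM.adj2 hqT.adj1 hqT.adj3.symm hqT.adj2
    · by_cases hz4 : (R.facePerm q).snd = x4
      · rw [hz4] at hqT
        exact k4_false hK4 hL.adj3.symm hL.adj1 hR.adj2 hqT.adj1 hqT.adj3.symm hqT.adj2
      · exact c6_false hC6 hqT.adj3 hL.adj3 hR.adj2 hR.adj3 hM.adj3 hqT.adj2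
          hzy hz4 hz3 n14 n13 n12 hy3 hy2 n24.symm

/-- frontier dart `x2 → x3` of a B5a configuration -/
lemma B5a_r2 (hK4 : G.CliqueFree 4) (hC6 : G.CycleFree 6)
    (hL : R.FTri tL y x2 x1) (hM : R.FTri tM x2 y x3) (hR : R.FTri tR x3 y x4)
    (n13 : x1 ≠ x3) (n14 : x1 ≠ x4) (n24 : x2 ≠ x4)
    {q : G.Dart} (hqf : q.fst = x2) (hqs : q.snd = x3) (hq3 : R.faceLen q = 3) : False := by
  have hqT : R.FTri q x2 x3 (R.facePerm q).snd := ⟨hq3, hqf, hqs, rfl⟩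
  have hy1 : y ≠ x1 := hL.ne3.symm
  have hy2 : y ≠ x2 := hL.ne1
  have hy3 : y ≠ x3 := hM.ne2
  have hy4 : y ≠ x4 := hR.ne2
  have n12 : x1 ≠ x2 := hL.ne2.symm
  have n23 : x2 ≠ x3 := hM.ne3.symm
  have n34 : x3 ≠ x4 := hR.ne3.symm
  by_cases hzy : (R.facePerm q).snd = y
  · have he : R.facePerm q = tR :=
      dart_eq_of (by rw [hqT.fst2, hR.fst1]) (by rw [hzy, hR.snd1])
    have hmem : q ∈ R.faceOf tR := mem_of_facePerm_mem (he ▸ hR.dart1_mem)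
    exact sat_contra hR hmem (by rw [hqf]; tauto) (by rw [hqf]; tauto) (by rw [hqf]; tauto)
  · by_cases hz1 : (R.facePerm q).snd = x1
    · rw [hz1] at hqT
      exact k4_false hK4 hL.adj3.symm hL.adj1 hM.adj2 hL.adj2.symm hqT.adj2.symm hqT.adj1
    · by_cases hz4 : (R.facePerm q).snd = x4
      · rw [hz4] at hqT
        exact k4_false hK4 hL.adj1 hM.adj2 hR.adj2 hqT.adj1 hqT.adj3.symm hqT.adj2
      · exact c6_false hC6 hqT.adj2.symm hR.adj3.symm hR.adj2.symm hL.adj3.symm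
          hL.adj2.symm hqT.adj3.symm hz4 hzy hz1 hy3.symm n13.symm n23.symm
          n14.symm n24.symm hy2

/-- frontier dart `x3 → x4` of a B5a configuration -/
lemma B5a_r3 (hK4 : G.CliqueFree 4) (hC6 : G.CycleFree 6)
    (hL : R.FTri tL y x2 x1) (hM : R.FTri tM x2 y x3) (hR : R.FTri tR x3 y x4)
    (n13 : x1 ≠ x3) (n14 : x1 ≠ x4) (n24 : x2 ≠ x4)
    {q : G.Dart} (hqf : q.fst = x3) (hqs : q.snd = x4) (hq3 : R.faceLen q = 3) : False := by
  have hqT : R.FTri q x3 x4 (R.facePerm q).snd := ⟨hq3, hqf, hqs, rfl⟩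
  have hy1 : y ≠ x1 := hL.ne3.symm
  have hy2 : y ≠ x2 := hL.ne1
  have hy3 : y ≠ x3 := hM.ne2
  have hy4 : y ≠ x4 := hR.ne2
  have n12 : x1 ≠ x2 := hL.ne2.symm
  have n23 : x2 ≠ x3 := hM.ne3.symm
  have n34 : x3 ≠ x4 := hR.ne3.symm
  by_cases hzy : (R.facePerm q).snd = y
  · have he : R.facePerm (R.facePerm q) = R.facePerm tM :=
      dart_eq_of (by rw [hqT.fst3, hzy, hM.rotate.fst1]) (by rw [hqT.snd3, hM.rotate.snd1])
    have hmem : q ∈ R.faceOf tM := mem_of_facePerm2_mem (he ▸ hM.dart2_mem)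
    exact sat_contra hM hmem (by rw [hqf]; tauto) (by rw [hqf]; tauto) (by rw [hqs]; tauto)
  · by_cases hz1 : (R.facePerm q).snd = x1
    · rw [hz1] at hqT
      exact k4_false hK4 hL.adj3.symm hM.adj2 hR.adj2 hqT.adj3 hqT.adj2.symm hqT.adj1
    · by_cases hz2 : (R.facePerm q).snd = x2
      · rw [hz2] at hqT
        exact k4_false hK4 hL.adj1 hM.adj2 hR.adj2 hM.adj3.symm hqT.adj2.symm hqT.adj1
      · exact c6_false hC6 hqT.adj2.symm hR.adj2.symm hL.adj3.symm hL.adj2.symm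
          hM.adj3.symm hqT.adj3.symm hzy hz1 hz2 n14.symm n24.symm n34.symm hy2 hy3 n13

end B5aR
section B5aF
variable {tL tM tR : G.Dart} {y x1 x2 x3 x4 : V}

lemma stageB5a_final (hK4 : G.CliqueFree 4) (hC6 : G.CycleFree 6)
    (hL : R.FTri tL y x2 x1) (hM : R.FTri tM x2 y x3) (hR : R.FTri tR x3 y x4)
    (n13 : x1 ≠ x3) (n14 : x1 ≠ x4) (n24 : x2 ≠ x4)
    (hnc : ∀ q : G.Dart, q.fst = y → q.snd = x1 → R.faceLen q = 3 →
      (R.facePerm q).snd ≠ x4) :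
    R.triBlockOf s(y, x2) =
      {s(y,x1), s(y,x2), s(y,x3), s(y,x4), s(x1,x2), s(x2,x3), s(x3,x4)} := by
  have hLa := hL.rotate; have hLb := hL.rotate.rotate
  have hMa := hM.rotate; have hMb := hM.rotate.rotate
  have hRa := hR.rotate; have hRb := hR.rotate.rotate
  refine R.triBlock_eq_of (by simp) ?_ ?_
  · have ryx3 : Relation.ReflTransGen R.shares3Face s(y,x2) s(y,x3) := by
      rw [show s(y,x2) = s(x2,y) from Sym2.eq_swap]
      exact Relation.ReflTransGen.single hM.sh12
    have ryx4 : Relation.ReflTransGen R.shares3Face s(y,x2) s(y,x4) :=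
      ryx3.trans (by
        rw [show s(y,x3) = s(x3,y) from Sym2.eq_swap]
        exact Relation.ReflTransGen.single hR.sh12)
    intro e' he'
    simp only [Set.mem_insert_iff, Set.mem_singleton_iff] at he'
    rcases he' with rfl | rfl | rfl | rfl | rfl | rfl | rfl
    · rw [show s(y,x1) = s(x1,y) from Sym2.eq_swap]
      exact Relation.ReflTransGen.single hL.sh13
    · exact Relation.ReflTransGen.refl
    · exact ryx3
    · exact ryx4
    · rw [show s(x1,x2) = s(x2,x1) from Sym2.eq_swap]
      exact Relation.ReflTransGen.single hL.sh12
    · refine ryx3.trans ?_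
      rw [show s(x2,x3) = s(x3,x2) from Sym2.eq_swap]
      exact Relation.ReflTransGen.single hM.sh23
    · refine ryx4.trans ?_
      rw [show s(x3,x4) = s(x4,x3) from Sym2.eq_swap]
      exact Relation.ReflTransGen.single hR.sh23
  · rintro e₁ he₁ e₂ ⟨q, d₂, hqe, hd₂e, hq3, hsc⟩
    simp only [Set.mem_insert_iff, Set.mem_singleton_iff] at he₁
    rcases he₁ with rfl | rfl | rfl | rfl | rfl | rfl | rfl <;>
        rcases dart_of_edge hqe with ⟨hf, hs⟩ | ⟨hf, hs⟩
    · exact absurd (B5a_q1 hK4 hC6 hL hM hR n13 n14 n24 hnc hf hs hq3) not_false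
    · rcases closed_internal hLb (dart_eq_of (hf.trans hLb.fst1.symm) (hs.trans hLb.snd1.symm))
        hsc with h | h | h <;> rw [← hd₂e, h] <;> simp [Sym2.eq_iff]
    · rcases closed_internal hL (dart_eq_of (hf.trans hL.fst1.symm) (hs.trans hL.snd1.symm))
        hsc with h | h | h <;> rw [← hd₂e, h] <;> simp [Sym2.eq_iff]
    · rcases closed_internal hM (dart_eq_of (hf.trans hM.fst1.symm) (hs.trans hM.snd1.symm))
        hsc with h | h | h <;> rw [← hd₂e, h] <;> simp [Sym2.eq_iff]
    · rcases closed_internal hMa (dart_eq_of (hf.trans hMa.fst1.symm) (hs.trans hMa.snd1.symm))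
        hsc with h | h | h <;> rw [← hd₂e, h] <;> simp [Sym2.eq_iff]
    · rcases closed_internal hR (dart_eq_of (hf.trans hR.fst1.symm) (hs.trans hR.snd1.symm))
        hsc with h | h | h <;> rw [← hd₂e, h] <;> simp [Sym2.eq_iff]
    · rcases closed_internal hRa (dart_eq_of (hf.trans hRa.fst1.symm) (hs.trans hRa.snd1.symm))
        hsc with h | h | h <;> rw [← hd₂e, h] <;> simp [Sym2.eq_iff]
    · exact absurd (B5a_q2 hK4 hC6 hL hM hR n13 n14 n24 hnc hf hs hq3) not_false
    · exact absurd (B5a_r1 hK4 hC6 hL hM hR n13 n14 n24 hf hs hq3) not_false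
    · rcases closed_internal hLa (dart_eq_of (hf.trans hLa.fst1.symm) (hs.trans hLa.snd1.symm))
        hsc with h | h | h <;> rw [← hd₂e, h] <;> simp [Sym2.eq_iff]
    · exact absurd (B5a_r2 hK4 hC6 hL hM hR n13 n14 n24 hf hs hq3) not_false
    · rcases closed_internal hMb (dart_eq_of (hf.trans hMb.fst1.symm) (hs.trans hMb.snd1.symm))
        hsc with h | h | h <;> rw [← hd₂e, h] <;> simp [Sym2.eq_iff]
    · exact absurd (B5a_r3 hK4 hC6 hL hM hR n13 n14 n24 hf hs hq3) not_false
    · rcases closed_internal hRb (dart_eq_of (hf.trans hRb.fst1.symm) (hs.trans hRb.snd1.symm))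
        hsc with h | h | h <;> rw [← hd₂e, h] <;> simp [Sym2.eq_iff]

lemma stageB5a (hK4 : G.CliqueFree 4) (hC6 : G.CycleFree 6)
    (hL : R.FTri tL y x2 x1) (hM : R.FTri tM x2 y x3) (hR : R.FTri tR x3 y x4)
    (n13 : x1 ≠ x3) (n14 : x1 ≠ x4) (n24 : x2 ≠ x4) :
    IsB5aBlock (R.triBlockOf s(y, x2)) ∨ IsB5bBlock (R.triBlockOf s(y, x2)) := by
  have hy1 : y ≠ x1 := hL.ne3.symm
  have hy2 : y ≠ x2 := hL.ne1
  have hy3 : y ≠ x3 := hM.ne2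
  have hy4 : y ≠ x4 := hR.ne2
  have n12 : x1 ≠ x2 := hL.ne2.symm
  have n23 : x2 ≠ x3 := hM.ne3.symm
  have n34 : x3 ≠ x4 := hR.ne3.symm
  by_cases hcomp : ∃ q : G.Dart, q.fst = y ∧ q.snd = x1 ∧ R.faceLen q = 3 ∧
      (R.facePerm q).snd = x4
  · obtain ⟨q, hqf, hqs, hq3, hq4⟩ := hcomp
    right
    rw [stageB5b hK4 hC6 hL hM.rotate hR.rotate (⟨hq3, hqf, hqs, hq4⟩ : R.FTri q y x1 x4)
      n13 n24]
    exact ⟨y, x1, x2, x3, x4, hy1, hy2, hy3, hy4, n12, n13, n14, n23, n24, n34, rfl⟩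
  · push_neg at hcomp
    left
    rw [stageB5a_final hK4 hC6 hL hM hR n13 n14 n24 hcomp]
    exact ⟨y, x1, x2, x3, x4, hy1, hy2, hy3, hy4, n12, n13, n14, n23, n24, n34, rfl⟩

end B5aF
section B4
variable {t u : G.Dart} {a b c w : V}

/-- frontier dart `c → b` of a B4 configuration, apex among existing vertices -/
lemma B4_f1 (hK4 : G.CliqueFree 4)
    (hT : R.FTri t a b c) (hU : R.FTri u b a w) (wc : w ≠ c)
    {q : G.Dart} (hf : q.fst = c) (hs : q.snd = b) (hq3 : R.faceLen q = 3)
    (hz : (R.facePerm q).snd = a ∨ (R.facePerm q).snd = b ∨ (R.facePerm q).snd = c ∨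
      (R.facePerm q).snd = w) : False := by
  have hqT : R.FTri q c b (R.facePerm q).snd := ⟨hq3, hf, hs, rfl⟩
  have wa : w ≠ a := hU.ne2.symm
  have wb : w ≠ b := hU.ne3
  rcases hz with hz | hz | hz | hz
  · have he : R.facePerm q = u := dart_eq_of (by rw [hqT.fst2, hU.fst1]) (by rw [hz, hU.snd1])
    have hmem : q ∈ R.faceOf u := mem_of_facePerm_mem (he ▸ hU.dart1_mem)
    exact sat_contra hU hmem (by rw [hf]; exact fun h => hT.ne2 h.1.symm)
      (by rw [hf]; exact fun h => hT.ne3 h.1) (by rw [hf]; exact fun h => wc h.1.symm)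
  · exact hqT.ne2 hz.symm
  · exact hqT.ne3 hz
  · rw [hz] at hqT
    exact k4_false hK4 hT.adj1 hT.adj3.symm hU.adj2 hT.adj2 hU.adj3.symm hqT.adj3.symm

/-- frontier dart `a → c` of a B4 configuration, apex among existing vertices -/
lemma B4_f2 (hK4 : G.CliqueFree 4)
    (hT : R.FTri t a b c) (hU : R.FTri u b a w) (wc : w ≠ c)
    {q : G.Dart} (hf : q.fst = a) (hs : q.snd = c) (hq3 : R.faceLen q = 3)
    (hz : (R.facePerm q).snd = a ∨ (R.facePerm q).snd = b ∨ (R.facePerm q).snd = c ∨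
      (R.facePerm q).snd = w) : False := by
  have hqT : R.FTri q a c (R.facePerm q).snd := ⟨hq3, hf, hs, rfl⟩
  have wa : w ≠ a := hU.ne2.symm
  have wb : w ≠ b := hU.ne3
  rcases hz with hz | hz | hz | hz
  · exact hqT.ne3 hz
  · have he : R.facePerm (R.facePerm q) = u :=
      dart_eq_of (by rw [hqT.fst3, hz, hU.fst1]) (by rw [hqT.snd3, hU.snd1])
    have hmem : q ∈ R.faceOf u := mem_of_facePerm2_mem (he ▸ hU.dart1_mem)
    exact sat_contra hU hmem (by rw [hf]; exact fun h => hT.ne1 h.1)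
      (by rw [hs]; exact fun h => wc (h.2.symm)) (by rw [hf]; exact fun h => wa h.1.symm)
  · exact hqT.ne2 hz.symm
  · rw [hz] at hqT
    exact k4_false hK4 hT.adj1 hT.adj3.symm hU.adj2 hT.adj2 hU.adj3.symm hqT.adj2

/-- frontier dart `w → a` of a B4 configuration, apex among existing vertices -/
lemma B4_f3 (hK4 : G.CliqueFree 4)
    (hT : R.FTri t a b c) (hU : R.FTri u b a w) (wc : w ≠ c)
    {q : G.Dart} (hf : q.fst = w) (hs : q.snd = a) (hq3 : R.faceLen q = 3)
    (hz : (R.facePerm q).snd = a ∨ (R.facePerm q).snd = b ∨ (R.facePerm q).snd = c ∨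
      (R.facePerm q).snd = w) : False := by
  have hqT : R.FTri q w a (R.facePerm q).snd := ⟨hq3, hf, hs, rfl⟩
  have wa : w ≠ a := hU.ne2.symm
  have wb : w ≠ b := hU.ne3
  rcases hz with hz | hz | hz | hz
  · exact hqT.ne2 hz.symm
  · have he : R.facePerm q = t := dart_eq_of (by rw [hqT.fst2, hT.fst1]) (by rw [hz, hT.snd1])
    have hmem : q ∈ R.faceOf t := mem_of_facePerm_mem (he ▸ hT.dart1_mem)
    exact sat_contra hT hmem (by rw [hf]; exact fun h => wa h.1)
      (by rw [hf]; exact fun h => wb h.1) (by rw [hf]; exact fun h => wc h.1)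
  · rw [hz] at hqT
    exact k4_false hK4 hT.adj1 hT.adj3.symm hU.adj2 hT.adj2 hU.adj3.symm hqT.adj3
  · exact hqT.ne3 hz

/-- frontier dart `b → w` of a B4 configuration, apex among existing vertices -/
lemma B4_f4 (hK4 : G.CliqueFree 4)
    (hT : R.FTri t a b c) (hU : R.FTri u b a w) (wc : w ≠ c)
    {q : G.Dart} (hf : q.fst = b) (hs : q.snd = w) (hq3 : R.faceLen q = 3)
    (hz : (R.facePerm q).snd = a ∨ (R.facePerm q).snd = b ∨ (R.facePerm q).snd = c ∨
      (R.facePerm q).snd = w) : False := by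
  have hqT : R.FTri q b w (R.facePerm q).snd := ⟨hq3, hf, hs, rfl⟩
  have wa : w ≠ a := hU.ne2.symm
  have wb : w ≠ b := hU.ne3
  rcases hz with hz | hz | hz | hz
  · have he : R.facePerm (R.facePerm q) = t :=
      dart_eq_of (by rw [hqT.fst3, hz, hT.fst1]) (by rw [hqT.snd3, hT.snd1])
    have hmem : q ∈ R.faceOf t := mem_of_facePerm2_mem (he ▸ hT.dart1_mem)
    exact sat_contra hT hmem (by rw [hf]; exact fun h => hT.ne1 h.1.symm)
      (by rw [hs]; exact fun h => wc h.2) (by rw [hf]; exact fun h => hT.ne2 h.1)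
  · exact hqT.ne3 hz
  · rw [hz] at hqT
    exact k4_false hK4 hT.adj1 hT.adj3.symm hU.adj2 hT.adj2 hU.adj3.symm hqT.adj2.symm
  · exact hqT.ne2 hz.symm

lemma stageB4 (hK4 : G.CliqueFree 4) (hC6 : G.CycleFree 6)
    (hT : R.FTri t a b c) (hU : R.FTri u b a w) (wc : w ≠ c) :
    IsK2Block (R.triBlockOf s(a, b)) ∨ IsK3Block (R.triBlockOf s(a, b)) ∨
      IsB4Block (R.triBlockOf s(a, b)) ∨ IsB5aBlock (R.triBlockOf s(a, b)) ∨
      IsB5bBlock (R.triBlockOf s(a, b)) := by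
  have wa : w ≠ a := hU.ne2.symm
  have wb : w ≠ b := hU.ne3
  by_cases hg : ∃ q : G.Dart, R.faceLen q = 3 ∧
      ((q.fst = c ∧ q.snd = b) ∨ (q.fst = a ∧ q.snd = c) ∨ (q.fst = w ∧ q.snd = a) ∨
        (q.fst = b ∧ q.snd = w)) ∧
      (R.facePerm q).snd ≠ a ∧ (R.facePerm q).snd ≠ b ∧ (R.facePerm q).snd ≠ c ∧
      (R.facePerm q).snd ≠ w
  · obtain ⟨q, hq3, hpos, hva, hvb, hvc, hvw⟩ := hg
    rcases hpos with ⟨hf, hs⟩ | ⟨hf, hs⟩ | ⟨hf, hs⟩ | ⟨hf, hs⟩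
    · -- apex v on edge bc : B5a with labels (b, w, a, c, v)
      have hqT : R.FTri q c b (R.facePerm q).snd := ⟨hq3, hf, hs, rfl⟩
      have h5 := stageB5a hK4 hC6 hU hT hqT wc (fun h => hvw h.symm) (fun h => hva h.symm)
      rw [show s(a,b) = s(b,a) from Sym2.eq_swap]
      exact Or.inr (Or.inr (Or.inr h5))
    · -- apex v on edge ca : B5a with labels (a, v, c, b, w)
      have hqT : R.FTri q a c (R.facePerm q).snd := ⟨hq3, hf, hs, rfl⟩
      have h5 := stageB5a hK4 hC6 hqT hT.rotate.rotate hU (fun h => hvb h) (fun h => hvw h)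
        wc.symm
      rw [R.triBlockOf_congr hT.sh13, show s(c,a) = s(a,c) from Sym2.eq_swap]
      exact Or.inr (Or.inr (Or.inr h5))
    · -- apex v on edge aw : B5a with labels (a, c, b, w, v)
      have hqT : R.FTri q w a (R.facePerm q).snd := ⟨hq3, hf, hs, rfl⟩
      have h5 := stageB5a hK4 hC6 hT hU hqT wc.symm (fun h => hvc h.symm)
        (fun h => hvb h.symm)
      exact Or.inr (Or.inr (Or.inr h5))
    · -- apex v on edge bw : B5a with labels (b, v, w, a, c)
      have hqT : R.FTri q b w (R.facePerm q).snd := ⟨hq3, hf, hs, rfl⟩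
      have h5 := stageB5a hK4 hC6 hqT hU.rotate.rotate hT (fun h => hva h)
        (fun h => hvc h) wc
      rw [show s(a,b) = s(b,a) from Sym2.eq_swap, R.triBlockOf_congr hU.sh13,
        show s(w,b) = s(b,w) from Sym2.eq_swap]
      exact Or.inr (Or.inr (Or.inr h5))
  · -- B4 is final
    right; right; left
    have hTa := hT.rotate; have hTb := hT.rotate.rotate
    have hUa := hU.rotate; have hUb := hU.rotate.rotate
    have hbl : R.triBlockOf s(a, b) = {s(c,a), s(c,b), s(a,b), s(a,w), s(b,w)} := by
      refine R.triBlock_eq_of (by simp) ?_ ?_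
      · intro e' he'
        simp only [Set.mem_insert_iff, Set.mem_singleton_iff] at he'
        rcases he' with rfl | rfl | rfl | rfl | rfl
        · exact Relation.ReflTransGen.single hT.sh13
        · rw [show s(c,b) = s(b,c) from Sym2.eq_swap]
          exact Relation.ReflTransGen.single hT.sh12
        · exact Relation.ReflTransGen.refl
        · rw [show s(a,b) = s(b,a) from Sym2.eq_swap]
          exact Relation.ReflTransGen.single hU.sh12
        · rw [show s(a,b) = s(b,a) from Sym2.eq_swap, show s(b,w) = s(w,b) from Sym2.eq_swap]
          exact Relation.ReflTransGen.single hU.sh13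
      · rintro e₁ he₁ e₂ ⟨q, d₂, hqe, hd₂e, hq3, hsc⟩
        have hval : ∀ p : G.Dart, R.faceLen p = 3 →
            ((p.fst = c ∧ p.snd = b) ∨ (p.fst = a ∧ p.snd = c) ∨ (p.fst = w ∧ p.snd = a) ∨
              (p.fst = b ∧ p.snd = w)) →
            ((R.facePerm p).snd = a ∨ (R.facePerm p).snd = b ∨ (R.facePerm p).snd = c ∨
              (R.facePerm p).snd = w) := by
          intro p h3 hpos
          by_contra hcon
          push_neg at hcon
          exact hg ⟨p, h3, hpos, hcon.1, hcon.2.1, hcon.2.2.1, hcon.2.2.2⟩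
        simp only [Set.mem_insert_iff, Set.mem_singleton_iff] at he₁
        rcases he₁ with rfl | rfl | rfl | rfl | rfl <;>
            rcases dart_of_edge hqe with ⟨hf, hs⟩ | ⟨hf, hs⟩
        · rcases closed_internal hTb (dart_eq_of (hf.trans hTb.fst1.symm)
            (hs.trans hTb.snd1.symm)) hsc with h | h | h <;>
              rw [← hd₂e, h] <;> simp [Sym2.eq_iff]
        · exact absurd (B4_f2 hK4 hT hU wc hf hs hq3
            (hval q hq3 (Or.inr (Or.inl ⟨hf, hs⟩)))) not_false
        · exact absurd (B4_f1 hK4 hT hU wc hf hs hq3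
            (hval q hq3 (Or.inl ⟨hf, hs⟩))) not_false
        · rcases closed_internal hTa (dart_eq_of (hf.trans hTa.fst1.symm)
            (hs.trans hTa.snd1.symm)) hsc with h | h | h <;>
              rw [← hd₂e, h] <;> simp [Sym2.eq_iff]
        · rcases closed_internal hT (dart_eq_of (hf.trans hT.fst1.symm)
            (hs.trans hT.snd1.symm)) hsc with h | h | h <;>
              rw [← hd₂e, h] <;> simp [Sym2.eq_iff]
        · rcases closed_internal hU (dart_eq_of (hf.trans hU.fst1.symm)
            (hs.trans hU.snd1.symm)) hsc with h | h | h <;>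
              rw [← hd₂e, h] <;> simp [Sym2.eq_iff]
        · rcases closed_internal hUa (dart_eq_of (hf.trans hUa.fst1.symm)
            (hs.trans hUa.snd1.symm)) hsc with h | h | h <;>
              rw [← hd₂e, h] <;> simp [Sym2.eq_iff]
        · exact absurd (B4_f3 hK4 hT hU wc hf hs hq3
            (hval q hq3 (Or.inr (Or.inr (Or.inl ⟨hf, hs⟩))))) not_false
        · exact absurd (B4_f4 hK4 hT hU wc hf hs hq3
            (hval q hq3 (Or.inr (Or.inr (Or.inr ⟨hf, hs⟩))))) not_false
        · rcases closed_internal hUb (dart_eq_of (hf.trans hUb.fst1.symm)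
            (hs.trans hUb.snd1.symm)) hsc with h | h | h <;>
              rw [← hd₂e, h] <;> simp [Sym2.eq_iff]
    rw [hbl]
    exact ⟨c, a, b, w, hT.ne3, hT.ne2.symm, wc.symm, hT.ne1, hU.ne2, wb.symm, rfl⟩

end B4
section K3
variable {t : G.Dart} {a b c : V}

lemma stageK3 (hK4 : G.CliqueFree 4) (hC6 : G.CycleFree 6) (hT : R.FTri t a b c) :
    IsK2Block (R.triBlockOf s(a, b)) ∨ IsK3Block (R.triBlockOf s(a, b)) ∨
      IsB4Block (R.triBlockOf s(a, b)) ∨ IsB5aBlock (R.triBlockOf s(a, b)) ∨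
      IsB5bBlock (R.triBlockOf s(a, b)) := by
  by_cases hg : ∃ q : G.Dart, R.faceLen q = 3 ∧
      ((q.fst = b ∧ q.snd = a) ∨ (q.fst = c ∧ q.snd = b) ∨ (q.fst = a ∧ q.snd = c)) ∧
      (R.facePerm q).snd ≠ a ∧ (R.facePerm q).snd ≠ b ∧ (R.facePerm q).snd ≠ c
  · obtain ⟨q, hq3, hpos, hva, hvb, hvc⟩ := hg
    rcases hpos with ⟨hf, hs⟩ | ⟨hf, hs⟩ | ⟨hf, hs⟩
    · exact stageB4 hK4 hC6 hT (⟨hq3, hf, hs, rfl⟩ : R.FTri q b a _) hvc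
    · rw [R.triBlockOf_congr hT.sh12]
      exact stageB4 hK4 hC6 hT.rotate (⟨hq3, hf, hs, rfl⟩ : R.FTri q c b _) hva
    · rw [R.triBlockOf_congr hT.sh13]
      exact stageB4 hK4 hC6 hT.rotate.rotate (⟨hq3, hf, hs, rfl⟩ : R.FTri q a c _) hvb
  · right; left
    have hTa := hT.rotate; have hTb := hT.rotate.rotate
    have hval : ∀ p : G.Dart, R.faceLen p = 3 →
        ((p.fst = b ∧ p.snd = a) ∨ (p.fst = c ∧ p.snd = b) ∨ (p.fst = a ∧ p.snd = c)) →
        ((R.facePerm p).snd = a ∨ (R.facePerm p).snd = b ∨ (R.facePerm p).snd = c) := by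
      intro p h3 hpos
      by_contra hcon
      push_neg at hcon
      exact hg ⟨p, h3, hpos, hcon.1, hcon.2.1, hcon.2.2⟩
    have hbl : R.triBlockOf s(a, b) = {s(a,b), s(b,c), s(a,c)} := by
      refine R.triBlock_eq_of (by simp) ?_ ?_
      · intro e' he'
        simp only [Set.mem_insert_iff, Set.mem_singleton_iff] at he'
        rcases he' with rfl | rfl | rfl
        · exact Relation.ReflTransGen.refl
        · exact Relation.ReflTransGen.single hT.sh12
        · rw [show s(a,c) = s(c,a) from Sym2.eq_swap]
          exact Relation.ReflTransGen.single hT.sh13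
      · rintro e₁ he₁ e₂ ⟨q, d₂, hqe, hd₂e, hq3, hsc⟩
        simp only [Set.mem_insert_iff, Set.mem_singleton_iff] at he₁
        rcases he₁ with rfl | rfl | rfl <;>
            rcases dart_of_edge hqe with ⟨hf, hs⟩ | ⟨hf, hs⟩
        · rcases closed_internal hT (dart_eq_of (hf.trans hT.fst1.symm)
            (hs.trans hT.snd1.symm)) hsc with h | h | h <;>
              rw [← hd₂e, h] <;> simp [Sym2.eq_iff]
        · -- frontier b → a, apex must be c
          have hqT : R.FTri q b a (R.facePerm q).snd := ⟨hq3, hf, hs, rfl⟩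
          rcases hval q hq3 (Or.inl ⟨hf, hs⟩) with hz | hz | hz
          · exact absurd hz.symm hqT.ne2
          · exact absurd hz hqT.ne3
          · rw [hz] at hqT
            rcases hqT.edge_cases hsc with h | h | h <;>
              rw [← hd₂e, h] <;> simp [Sym2.eq_iff]
        · rcases closed_internal hTa (dart_eq_of (hf.trans hTa.fst1.symm)
            (hs.trans hTa.snd1.symm)) hsc with h | h | h <;>
              rw [← hd₂e, h] <;> simp [Sym2.eq_iff]
        · -- frontier c → b, apex must be a
          have hqT : R.FTri q c b (R.facePerm q).snd := ⟨hq3, hf, hs, rfl⟩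
          rcases hval q hq3 (Or.inr (Or.inl ⟨hf, hs⟩)) with hz | hz | hz
          · rw [hz] at hqT
            rcases hqT.edge_cases hsc with h | h | h <;>
              rw [← hd₂e, h] <;> simp [Sym2.eq_iff]
          · exact absurd hz.symm hqT.ne2
          · exact absurd hz hqT.ne3
        · -- frontier a → c, apex must be b
          have hqT : R.FTri q a c (R.facePerm q).snd := ⟨hq3, hf, hs, rfl⟩
          rcases hval q hq3 (Or.inr (Or.inr ⟨hf, hs⟩)) with hz | hz | hz
          · exact absurd hz hqT.ne3
          · rw [hz] at hqT
            rcases hqT.edge_cases hsc with h | h | h <;>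
              rw [← hd₂e, h] <;> simp [Sym2.eq_iff]
          · exact absurd hz.symm hqT.ne2
        · rcases closed_internal hTb (dart_eq_of (hf.trans hTb.fst1.symm)
            (hs.trans hTb.snd1.symm)) hsc with h | h | h <;>
              rw [← hd₂e, h] <;> simp [Sym2.eq_iff]
    rw [hbl]
    exact ⟨a, b, c, hT.ne1, hT.ne3.symm, hT.ne2, rfl⟩

end K3
end Lemmas
end PlanarTuran

open PlanarTuran

/-- In a plane graph containing neither `K₄` nor `C₆` as a subgraph, every
triangular block is a single edge `K₂`, a triangle `K₃`, `B₄`, `B₅ₐ`, or `B₅ᵦ` (the wheel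
`W₄`). -/
theorem triangularBlock_types_K4_C6_free {V : Type*} (G : SimpleGraph V)
    (R : PlanarTuran.RotationSystem G) (hplane : R.GenusZero)
    (hK4 : G.CliqueFree 4) (hC6 : G.CycleFree 6) :
    ∀ B : Set (Sym2 V), R.IsTriangularBlock B →
      PlanarTuran.IsK2Block B ∨ PlanarTuran.IsK3Block B ∨ PlanarTuran.IsB4Block B ∨
        PlanarTuran.IsB5aBlock B ∨ PlanarTuran.IsB5bBlock B := by
  classical
  intro B hB
  obtain ⟨e, he, rfl⟩ := hB
  revert he
  induction e using Sym2.ind with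
  | _ u v =>
    intro he
    rw [SimpleGraph.mem_edgeSet] at he
    by_cases h₀ : R.faceLen (⟨(u, v), he⟩ : G.Dart) = 3
    · exact PlanarTuran.stageK3 hK4 hC6 (PlanarTuran.RotationSystem.FTri.mk' h₀)
    · by_cases h₁ : R.faceLen (⟨(v, u), he.symm⟩ : G.Dart) = 3
      · rw [show s(u,v) = s(v,u) from Sym2.eq_swap]
        exact PlanarTuran.stageK3 hK4 hC6 (PlanarTuran.RotationSystem.FTri.mk' h₁)
      · left
        refine ⟨u, v, he.ne, ?_⟩
        refine R.triBlock_eq_of rfl (fun e' he' => by rw [he'] : _) ?_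
        rintro e₁ he₁ e₂ ⟨q, d₂, hqe, hd₂e, hq3, hsc⟩
        rw [Set.mem_singleton_iff] at he₁
        subst he₁
        rcases PlanarTuran.RotationSystem.dart_of_edge hqe with ⟨hf, hs⟩ | ⟨hf, hs⟩
        · rw [PlanarTuran.RotationSystem.dart_eq_of (t := (⟨(u, v), he⟩ : G.Dart)) hf hs]
            at hq3
          exact absurd hq3 h₀
        · rw [PlanarTuran.RotationSystem.dart_eq_of (t := (⟨(v, u), he.symm⟩ : G.Dart)) hf hs]
            at hq3
          exact absurd hq3 h₁
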